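/- Wei-type duality for demi-matroids: Let D = (E,s,t) be a demi-matroid with |E| = n and k = s(E). Define σ_i := min{|X| : s(X) ≥ i} for 1 ≤ i ≤ k and τ_j := min{|X| : t(X) ≥ j} for 1 ≤ j ≤ n−k. Then the sets U := {σ_1,…,σ_k} and V := {n+1−τ_{n−k},…,n+1−τ_1} are disjoint and U ∪ V = {1,…,n}. -/

import Mathlib

open Finset

section Aux

variable {E : Type*} [Fintype E] [DecidableEq E]

/-- Maximum of `s` over sets of cardinality `r`. -/
private def gsup (s : Finset E → ℕ) (r : ℕ) : ℕ :=
  ((univ : Finset E).powersetCard r).sup s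

private lemma le_gsup (s : Finset E → ℕ) {X : Finset E} {r : ℕ} (h : X.card = r) :
    s X ≤ gsup s r :=
  Finset.le_sup (by simp [Finset.mem_powersetCard, h])

private lemma gsup_attained (s : Finset E → ℕ) {r : ℕ} (hr : r ≤ Fintype.card E) :
    ∃ X : Finset E, X.card = r ∧ s X = gsup s r := by
  obtain ⟨X, hX, h⟩ := Finset.exists_mem_eq_sup _
    (Finset.powersetCard_nonempty.2 (show r ≤ (univ : Finset E).card from hr)) s
  exact ⟨X, (Finset.mem_powersetCard.1 hX).2, h.symm⟩

private lemma gsup_le_top (s : Finset E → ℕ)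
    (hmono : ∀ X Y : Finset E, X ⊆ Y → s X ≤ s Y) (r : ℕ) : gsup s r ≤ s univ :=
  Finset.sup_le fun X _ => hmono X univ (subset_univ X)

private lemma gsup_mono (s : Finset E → ℕ)
    (hmono : ∀ X Y : Finset E, X ⊆ Y → s X ≤ s Y) {r r' : ℕ}
    (h : r ≤ r') (h' : r' ≤ Fintype.card E) : gsup s r ≤ gsup s r' := by
  obtain ⟨X, hXc, hXs⟩ := gsup_attained s (le_trans h h')
  obtain ⟨Y, hXY, hYu, hYc⟩ := Finset.exists_subsuperset_card_eq (n := r')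
    (Finset.subset_univ X) (by omega) (by simpa using h')
  calc gsup s r = s X := hXs.symm
    _ ≤ s Y := hmono X Y hXY
    _ ≤ gsup s r' := le_gsup s hYc

private lemma gsup_step (s : Finset E → ℕ)
    (hstep : ∀ (X : Finset E) (x : E), x ∈ X → s X ≤ s (X.erase x) + 1)
    {r : ℕ} (hr1 : 1 ≤ r) (hrn : r ≤ Fintype.card E) :
    gsup s r ≤ gsup s (r - 1) + 1 := by
  obtain ⟨X, hXc, hXs⟩ := gsup_attained s hrn
  obtain ⟨x, hx⟩ := Finset.card_pos.1 (by omega : 0 < X.card)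
  have hec : (X.erase x).card = r - 1 := by rw [Finset.card_erase_of_mem hx]; omega
  calc gsup s r = s X := hXs.symm
    _ ≤ s (X.erase x) + 1 := hstep X x hx
    _ ≤ gsup s (r - 1) + 1 := by have := le_gsup s hec; omega

/-- Characterization: `r` is one of the `σ_i` iff `gsup` jumps at `r`. -/
private lemma mem_sigma_iff (s : Finset E → ℕ)
    (hmono : ∀ X Y : Finset E, X ⊆ Y → s X ≤ s Y)
    (hstep : ∀ (X : Finset E) (x : E), x ∈ X → s X ≤ s (X.erase x) + 1)
    {r : ℕ} (hr1 : 1 ≤ r) (hrn : r ≤ Fintype.card E) :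
    (∃ i, (1 ≤ i ∧ i ≤ s univ) ∧
        sInf {m | ∃ X : Finset E, X.card = m ∧ i ≤ s X} = r)
      ↔ gsup s r = gsup s (r - 1) + 1 := by
  constructor
  · rintro ⟨i, ⟨hi1, hik⟩, hσ⟩
    have hne : {m | ∃ X : Finset E, X.card = m ∧ i ≤ s X}.Nonempty :=
      ⟨Fintype.card E, univ, by simp, hik⟩
    have hmem := Nat.sInf_mem hne
    rw [hσ] at hmem
    obtain ⟨X, hXc, hXs⟩ := hmem
    have h1 : i ≤ gsup s r := le_trans hXs (le_gsup s hXc)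
    have h2 : gsup s (r - 1) < i := by
      by_contra h
      push_neg at h
      obtain ⟨Y, hYc, hYs⟩ := gsup_attained s (le_trans (Nat.sub_le r 1) hrn)
      have hle : sInf {m | ∃ X : Finset E, X.card = m ∧ i ≤ s X} ≤ r - 1 :=
        Nat.sInf_le ⟨Y, hYc, by omega⟩
      omega
    have h3 := gsup_step s hstep hr1 hrn
    omega
  · intro h
    set i := gsup s r with hi
    have hi1 : 1 ≤ i := by omega
    have hik : i ≤ s univ := gsup_le_top s hmono r
    refine ⟨i, ⟨hi1, hik⟩, ?_⟩
    obtain ⟨X, hXc, hXs⟩ := gsup_attained s hrn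
    have hle : sInf {m | ∃ X : Finset E, X.card = m ∧ i ≤ s X} ≤ r :=
      Nat.sInf_le ⟨X, hXc, by omega⟩
    have hne : {m | ∃ X : Finset E, X.card = m ∧ i ≤ s X}.Nonempty :=
      ⟨Fintype.card E, univ, by simp, hik⟩
    have hmem := Nat.sInf_mem hne
    obtain ⟨Y, hYc, hYs⟩ := hmem
    by_contra hne'
    have hlt : sInf {m | ∃ X : Finset E, X.card = m ∧ i ≤ s X} ≤ r - 1 := by omega
    obtain ⟨Z, hYZ, hZu, hZc⟩ := Finset.exists_subsuperset_card_eq (n := r - 1)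
      (Finset.subset_univ Y) (by omega) (by simpa using (by omega : r - 1 ≤ Fintype.card E))
    have : i ≤ gsup s (r - 1) :=
      le_trans (le_trans hYs (hmono Y Z hYZ)) (le_gsup s hZc)
    omega

/-- Duality relation between the two `gsup` functions. -/
private lemma gsup_dual (s t : Finset E → ℕ)
    (hD : ∀ X : Finset E, ((univ \ X).card : ℤ) - s (univ \ X) = (t univ : ℤ) - t X)
    {r : ℕ} (hrn : r ≤ Fintype.card E) :
    (gsup t (Fintype.card E - r) : ℤ) + r = (gsup s r : ℤ) + t univ := by
  have hcompl : ∀ X : Finset E, (univ \ X).card = Fintype.card E - X.card := by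
    intro X
    rw [Finset.card_sdiff_of_subset (Finset.subset_univ X), Finset.card_univ]
  apply le_antisymm
  · obtain ⟨X, hXc, hXt⟩ := gsup_attained t (Nat.sub_le (Fintype.card E) r)
    have hD1 := hD X
    have hcc : (univ \ X).card = r := by rw [hcompl, hXc]; omega
    have h1 : s (univ \ X) ≤ gsup s r := le_gsup s hcc
    rw [hcc] at hD1
    have : (t X : ℤ) = (t univ : ℤ) - r + s (univ \ X) := by linarith
    have h2 : ((gsup t (Fintype.card E - r) : ℕ) : ℤ) = (t X : ℤ) := by exact_mod_cast hXt.symm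
    push_cast at *
    linarith
  · obtain ⟨X, hXc, hXs⟩ := gsup_attained s hrn
    have hD1 := hD (univ \ X)
    have hXX : univ \ (univ \ X) = X := Finset.sdiff_sdiff_eq_self (Finset.subset_univ X)
    rw [hXX, hXc] at hD1
    have hcc : (univ \ X).card = Fintype.card E - r := by rw [hcompl, hXc]
    have h1 : t (univ \ X) ≤ gsup t (Fintype.card E - r) := le_gsup t hcc
    have h2 : (t (univ \ X) : ℤ) = (t univ : ℤ) - r + s X := by linarith
    push_cast at *
    linarith

end Aux

/-- Wei-type duality for demi-matroids: with `U = {σ_1, …, σ_k}` and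
`V = {n + 1 - τ_(n-k), …, n + 1 - τ_1}`, the sets `U` and `V` are disjoint
and `U ∪ V = {1, …, n}`. -/
theorem demimatroid_wei_duality {E : Type*} [Fintype E] [DecidableEq E]
    (s t : Finset E → ℕ)
    (hRs : ∀ X Y : Finset E, X ⊆ Y → s X ≤ s Y ∧ s Y ≤ Y.card)
    (hRt : ∀ X Y : Finset E, X ⊆ Y → t X ≤ t Y ∧ t Y ≤ Y.card)
    (hD : ∀ X : Finset E, ((univ \ X).card : ℤ) - s (univ \ X) = (t univ : ℤ) - t X) :
    let n := Fintype.card E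
    let k := s univ
    let σ : ℕ → ℕ := fun i => sInf {m | ∃ X : Finset E, X.card = m ∧ i ≤ s X}
    let τ : ℕ → ℕ := fun j => sInf {m | ∃ X : Finset E, X.card = m ∧ j ≤ t X}
    let U : Finset ℕ := (Finset.Icc 1 k).image σ
    let V : Finset ℕ := (Finset.Icc 1 (n - k)).image (fun j => n + 1 - τ j)
    Disjoint U V ∧ U ∪ V = Finset.Icc 1 n := by
  intro n k σ τ U V
  have hsmono : ∀ X Y : Finset E, X ⊆ Y → s X ≤ s Y := fun X Y h => (hRs X Y h).1
  have htmono : ∀ X Y : Finset E, X ⊆ Y → t X ≤ t Y := fun X Y h => (hRt X Y h).1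
  have hscard : ∀ X : Finset E, s X ≤ X.card := fun X => (hRs X X le_rfl).2
  have htcard : ∀ X : Finset E, t X ≤ X.card := fun X => (hRt X X le_rfl).2
  have hcompl : ∀ X : Finset E, (univ \ X).card = n - X.card := by
    intro X
    rw [Finset.card_sdiff_of_subset (Finset.subset_univ X), Finset.card_univ]
  have hkn : k ≤ n := le_trans (hscard univ) (by simp [n, Finset.card_univ])
  have ht0 : t ∅ = 0 := Nat.le_zero.1 (by simpa using htcard ∅)
  have htuniv : (t univ : ℤ) = (n : ℤ) - k := by
    have := hD ∅
    rw [Finset.sdiff_empty, ht0] at this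
    have hcu : ((univ : Finset E).card : ℤ) = n := by rw [Finset.card_univ]
    simp only [hcu] at this
    omega
  have htunivn : t univ = n - k := by omega
  -- duality with the roles of s and t swapped
  have hD' : ∀ X : Finset E, ((univ \ X).card : ℤ) - t (univ \ X) = (s univ : ℤ) - s X := by
    intro X
    have h1 := hD (univ \ X)
    have hXX : univ \ (univ \ X) = X := Finset.sdiff_sdiff_eq_self (Finset.subset_univ X)
    rw [hXX] at h1
    have hXn : X.card ≤ n := by simpa using Finset.card_le_univ X
    have hc : (univ \ X).card = n - X.card := hcompl X
    rw [hc]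
    omega
  -- unit-increase properties
  have hsstep : ∀ (X : Finset E) (x : E), x ∈ X → s X ≤ s (X.erase x) + 1 := by
    intro X x hx
    have h1 := hD' X
    have h2 := hD' (X.erase x)
    have hsub : univ \ X ⊆ univ \ X.erase x :=
      Finset.sdiff_subset_sdiff le_rfl (Finset.erase_subset x X)
    have hmt := htmono _ _ hsub
    have hce : (X.erase x).card = X.card - 1 := Finset.card_erase_of_mem hx
    have hc1 : (univ \ X).card = n - X.card := hcompl X
    have hc2 : (univ \ X.erase x).card = n - (X.card - 1) := by rw [hcompl, hce]
    have hXn : X.card ≤ n := Finset.card_le_univ X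
    have hX1 : 1 ≤ X.card := Finset.card_pos.2 ⟨x, hx⟩
    rw [hc1] at h1; rw [hc2] at h2
    omega
  have htstep : ∀ (X : Finset E) (x : E), x ∈ X → t X ≤ t (X.erase x) + 1 := by
    intro X x hx
    have h1 := hD X
    have h2 := hD (X.erase x)
    have hsub : univ \ X ⊆ univ \ X.erase x :=
      Finset.sdiff_subset_sdiff le_rfl (Finset.erase_subset x X)
    have hms := hsmono _ _ hsub
    have hce : (X.erase x).card = X.card - 1 := Finset.card_erase_of_mem hx
    have hc1 : (univ \ X).card = n - X.card := hcompl X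
    have hc2 : (univ \ X.erase x).card = n - (X.card - 1) := by rw [hcompl, hce]
    have hXn : X.card ≤ n := Finset.card_le_univ X
    have hX1 : 1 ≤ X.card := Finset.card_pos.2 ⟨x, hx⟩
    rw [hc1] at h1; rw [hc2] at h2
    omega
  -- bounds on σ and τ
  have hσbound : ∀ i, 1 ≤ i → i ≤ k → 1 ≤ σ i ∧ σ i ≤ n := by
    intro i hi1 hik
    have hne : {m | ∃ X : Finset E, X.card = m ∧ i ≤ s X}.Nonempty :=
      ⟨n, univ, by simp [n], hik⟩
    obtain ⟨X, hXc, hXs⟩ := Nat.sInf_mem hne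
    have h1 : i ≤ X.card := le_trans hXs (hscard X)
    have h2 : σ i ≤ n := Nat.sInf_le ⟨univ, by simp [n], hik⟩
    exact ⟨by simp only [σ]; omega, h2⟩
  have hτbound : ∀ j, 1 ≤ j → j ≤ n - k → 1 ≤ τ j ∧ τ j ≤ n := by
    intro j hj1 hjk
    have hjt : j ≤ t univ := by omega
    have hne : {m | ∃ X : Finset E, X.card = m ∧ j ≤ t X}.Nonempty :=
      ⟨n, univ, by simp [n], hjt⟩
    obtain ⟨X, hXc, hXt⟩ := Nat.sInf_mem hne
    have h1 : j ≤ X.card := le_trans hXt (htcard X)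
    have h2 : τ j ≤ n := Nat.sInf_le ⟨univ, by simp [n], hjt⟩
    exact ⟨by simp only [τ]; omega, h2⟩
  have hUsub : U ⊆ Finset.Icc 1 n := by
    intro r hr
    obtain ⟨i, hi, hσi⟩ := Finset.mem_image.1 hr
    rw [Finset.mem_Icc] at hi
    have := hσbound i hi.1 hi.2
    rw [Finset.mem_Icc]
    omega
  have hVsub : V ⊆ Finset.Icc 1 n := by
    intro r hr
    obtain ⟨j, hj, hτj⟩ := Finset.mem_image.1 hr
    rw [Finset.mem_Icc] at hj
    have := hτbound j hj.1 hj.2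
    rw [Finset.mem_Icc]
    omega
  -- membership characterizations
  have hUmem : ∀ r, 1 ≤ r → r ≤ n →
      (r ∈ U ↔ gsup s r = gsup s (r - 1) + 1) := by
    intro r hr1 hrn
    rw [← mem_sigma_iff s hsmono hsstep hr1 hrn]
    simp only [U, Finset.mem_image, Finset.mem_Icc]; rfl
  have hVmem : ∀ r, 1 ≤ r → r ≤ n →
      (r ∈ V ↔ gsup t (n + 1 - r) = gsup t (n - r) + 1) := by
    intro r hr1 hrn
    have hr1n : 1 ≤ n + 1 - r := by omega
    have hrnn : n + 1 - r ≤ n := by omega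
    have hiff := mem_sigma_iff t htmono htstep hr1n hrnn
    have hsub1 : n + 1 - r - 1 = n - r := by omega
    rw [hsub1] at hiff
    rw [← hiff]
    clear hiff
    simp only [V, Finset.mem_image, Finset.mem_Icc]
    constructor
    · rintro ⟨j, ⟨hj1, hjk⟩, hτj⟩
      obtain ⟨hb1, hb2⟩ := hτbound j hj1 hjk
      have hjt : j ≤ t univ := htunivn ▸ hjk
      refine ⟨j, ⟨hj1, hjt⟩, ?_⟩
      show τ j = n + 1 - r
      revert hτj
      generalize τ j = m at hb1 hb2 ⊢
      intro hτj
      omega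
    · rintro ⟨j, ⟨hj1, hjk⟩, hτj⟩
      have hjk' : j ≤ n - k := htunivn ▸ hjk
      obtain ⟨hb1, hb2⟩ := hτbound j hj1 hjk'
      refine ⟨j, ⟨hj1, hjk'⟩, ?_⟩
      have hτj' : τ j = n + 1 - r := hτj
      show n + 1 - τ j = r
      revert hτj'
      generalize τ j = m at hb1 hb2 ⊢
      intro hτj'
      omega
  -- exclusive-or property
  have hxor : ∀ r, 1 ≤ r → r ≤ n →
      (gsup s r = gsup s (r - 1) + 1 ↔ ¬ (gsup t (n + 1 - r) = gsup t (n - r) + 1)) := by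
    intro r hr1 hrn
    have e1 := gsup_dual s t hD (by omega : r ≤ Fintype.card E)
    have e2 := gsup_dual s t hD (by omega : r - 1 ≤ Fintype.card E)
    have hn1 : Fintype.card E - r = n - r := rfl
    have hn2 : Fintype.card E - (r - 1) = n + 1 - r := by show n - (r-1) = n + 1 - r; omega
    rw [hn1] at e1
    rw [hn2] at e2
    have m1 : gsup s (r - 1) ≤ gsup s r := gsup_mono s hsmono (by omega) hrn
    have m2 : gsup s r ≤ gsup s (r - 1) + 1 := gsup_step s hsstep hr1 hrn
    have m3 : gsup t (n - r) ≤ gsup t (n + 1 - r) :=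
      gsup_mono t htmono (by omega) (by omega)
    have m4 : gsup t (n + 1 - r) ≤ gsup t (n + 1 - r - 1) + 1 :=
      gsup_step t htstep (by omega) (by omega)
    have hsub1 : n + 1 - r - 1 = n - r := by omega
    rw [hsub1] at m4
    have hr1' : ((r : ℤ) - 1) = ((r - 1 : ℕ) : ℤ) := by omega
    rw [← hr1'] at e2
    omega
  constructor
  · rw [Finset.disjoint_left]
    intro r hrU hrV
    have hr := Finset.mem_Icc.1 (hUsub hrU)
    have h1 := (hUmem r hr.1 hr.2).1 hrU
    have h2 := (hVmem r hr.1 hr.2).1 hrV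
    exact (hxor r hr.1 hr.2).1 h1 h2
  · ext r
    simp only [Finset.mem_union]
    constructor
    · rintro (h | h)
      · exact hUsub h
      · exact hVsub h
    · intro hr
      have hr' := Finset.mem_Icc.1 hr
      by_cases hQ : gsup t (n + 1 - r) = gsup t (n - r) + 1
      · exact Or.inr ((hVmem r hr'.1 hr'.2).2 hQ)
      · exact Or.inl ((hUmem r hr'.1 hr'.2).2 (((hxor r hr'.1 hr'.2)).2 hQ))
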